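/- For every real α > 0, the series Σ_{n=1}^∞ 1/sinh(α·2^n) converges and Σ_{n=1}^∞ 1/sinh(α·2^n) = e^(−α)/sinh(α). -/

import Mathlib

theorem sum_inv_sinh_pow_two (α : ℝ) (hα : 0 < α) :
    HasSum (fun n : ℕ => 1 / Real.sinh (α * 2 ^ (n + 1))) (Real.exp (-α) / Real.sinh α) := by
  set g : ℕ → ℝ := fun n => Real.exp (-(α * 2 ^ n)) / Real.sinh (α * 2 ^ n) with hg
  have hpos : ∀ n : ℕ, (0:ℝ) < α * 2 ^ n := fun n => by positivity
  have key : ∀ t : ℝ, 0 < t →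
      Real.exp (-t) / Real.sinh t - Real.exp (-(2*t)) / Real.sinh (2*t) = 1 / Real.sinh (2*t) := by
    intro t ht
    have hs : Real.sinh t ≠ 0 := ne_of_gt (Real.sinh_pos_iff.2 ht)
    have hs2 : Real.sinh (2*t) ≠ 0 := ne_of_gt (Real.sinh_pos_iff.2 (by linarith))
    have hkey2 : Real.exp (-t) * Real.sinh (2*t) - Real.sinh t * Real.exp (-(2*t))
        = Real.sinh t := by
      rw [← Real.cosh_sub_sinh t, ← Real.cosh_sub_sinh (2*t), Real.sinh_two_mul,
        Real.cosh_two_mul]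
      linear_combination Real.sinh t * Real.cosh_sq_sub_sinh_sq t
    field_simp
    rw [mul_comm 2 t] at hkey2
    linarith [hkey2]
  have hfg : ∀ n : ℕ, 1 / Real.sinh (α * 2 ^ (n + 1)) = g n - g (n + 1) := by
    intro n
    have h2t : α * 2 ^ (n + 1) = 2 * (α * 2 ^ n) := by ring
    simp only [hg]
    rw [h2t, ← key (α * 2 ^ n) (hpos n)]
  have hnonneg : ∀ n : ℕ, (0:ℝ) ≤ 1 / Real.sinh (α * 2 ^ (n + 1)) := by
    intro n
    have := Real.sinh_pos_iff.2 (hpos (n+1))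
    positivity
  rw [hasSum_iff_tendsto_nat_of_nonneg hnonneg]
  have hsum : ∀ n : ℕ, ∑ i ∈ Finset.range n, 1 / Real.sinh (α * 2 ^ (i + 1)) = g 0 - g n := by
    intro n
    rw [Finset.sum_congr rfl fun i _ => hfg i]
    exact Finset.sum_range_sub' g n
  simp only [hsum]
  have hg0 : g 0 = Real.exp (-α) / Real.sinh α := by simp [hg]
  have hmono : Filter.Tendsto (fun n : ℕ => α * 2 ^ n) Filter.atTop Filter.atTop :=
    Filter.Tendsto.const_mul_atTop hα (tendsto_pow_atTop_atTop_of_one_lt (by norm_num))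
  have hexp : Filter.Tendsto (fun n : ℕ => Real.exp (-(α * 2 ^ n))) Filter.atTop (nhds 0) :=
    Real.tendsto_exp_neg_atTop_nhds_zero.comp hmono
  have htend : Filter.Tendsto g Filter.atTop (nhds 0) := by
    have hb : ∀ n : ℕ, g n ≤ Real.exp (-(α * 2 ^ n)) / Real.sinh α := by
      intro n
      apply div_le_div_of_nonneg_left (Real.exp_pos _).le (Real.sinh_pos_iff.2 hα)
      exact Real.sinh_le_sinh.2 (by nlinarith [one_le_pow₀ (by norm_num : (1:ℝ) ≤ 2) (n := n)])
    have hb0 : ∀ n : ℕ, 0 ≤ g n := fun n => by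
      have := Real.sinh_pos_iff.2 (hpos n); simp only [hg]; positivity
    have : Filter.Tendsto (fun n : ℕ => Real.exp (-(α * 2 ^ n)) / Real.sinh α)
        Filter.atTop (nhds 0) := by
      simpa using hexp.div_const (Real.sinh α)
    exact squeeze_zero hb0 hb this
  have := (tendsto_const_nhds (x := g 0)).sub htend
  simpa [hg0] using this
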